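/- For any grid functions u¹, u², w¹, w² : {0,…,N+1} → ℝ, the functional φ_h := h Σ_{j=0}^{N} x_{j+1/2} (ρ u¹_{j+1/2} w¹_{j+1/2} + μ u²_{j+1/2} w²_{j+1/2}) satisfies |φ_h| ≤ L η E_h, where E_h := (h/2) Σ_{j=0}^{N} [ρ |w¹_{j+1/2}|² + μ |w²_{j+1/2}|² + β |γ u¹_{j+1/2} − u²_{j+1/2}|² + α₁ |u¹_{j+1/2}|²]. Consequently, for every 0 < δ < 1/(Lη), (1 − δLη) E_h ≤ E_h + δ φ_h ≤ (1 + δLη) E_h. -/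
import Mathlib


noncomputable section


lemma amgm9 (p q : ℝ) (hp : 0 < p) (hq : 0 < q) (x y : ℝ) :
    p * |x * y| ≤ Real.sqrt (p / q) / 2 * (p * x ^ 2 + q * y ^ 2) := by
  set s := Real.sqrt (p / q) with hs
  have hs0 : 0 < s := Real.sqrt_pos.2 (div_pos hp hq)
  have hs2 : s ^ 2 = p / q := Real.sq_sqrt (le_of_lt (div_pos hp hq))
  have hqs : q * s ^ 2 = p := by rw [hs2]; field_simp
  rcases abs_cases (x * y) with ⟨h1, _⟩ | ⟨h1, _⟩ <;> rw [h1] <;>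
    nlinarith [mul_nonneg (mul_nonneg hq.le hs0.le) (sq_nonneg (s * x - y)),
      mul_nonneg (mul_nonneg hq.le hs0.le) (sq_nonneg (s * x + y))]

lemma pointwise9 (ρ μ β γ α₁ η : ℝ) (hρ : 0 < ρ) (hμ : 0 < μ) (hβ : 0 < β)
    (hγ : 0 < γ) (hα₁ : 0 < α₁)
    (h1 : Real.sqrt (ρ / α₁) + γ * Real.sqrt (μ / α₁) ≤ η)
    (h2 : Real.sqrt (μ / β) + γ * Real.sqrt (μ / α₁) ≤ η)
    (a b w v : ℝ) :
    |ρ * a * w + μ * b * v| ≤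
      η / 2 * (ρ * w ^ 2 + μ * v ^ 2 + β * (γ * a - b) ^ 2 + α₁ * a ^ 2) := by
  have c1n : 0 ≤ Real.sqrt (ρ / α₁) := Real.sqrt_nonneg _
  have c2n : 0 ≤ Real.sqrt (μ / β) := Real.sqrt_nonneg _
  have c3n : 0 ≤ γ * Real.sqrt (μ / α₁) := by positivity
  have A := amgm9 ρ α₁ hρ hα₁ w a
  have B := amgm9 μ β hμ hβ v (γ * a - b)
  have C := amgm9 μ α₁ hμ hα₁ v a
  have s1 : 0 ≤ (η - Real.sqrt (ρ / α₁) - γ * Real.sqrt (μ / α₁)) * (α₁ * a ^ 2) :=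
    mul_nonneg (by linarith) (by positivity)
  have s2 : 0 ≤ (η - Real.sqrt (μ / β) - γ * Real.sqrt (μ / α₁)) * (μ * v ^ 2) :=
    mul_nonneg (by linarith) (by positivity)
  have s3 : 0 ≤ (η - Real.sqrt (ρ / α₁)) * (ρ * w ^ 2) :=
    mul_nonneg (by linarith) (by positivity)
  have s4 : 0 ≤ (η - Real.sqrt (μ / β)) * (β * (γ * a - b) ^ 2) :=
    mul_nonneg (by linarith) (by positivity)
  have C' : μ * γ * |v * a| ≤
      γ * Real.sqrt (μ / α₁) / 2 * (μ * v ^ 2 + α₁ * a ^ 2) := by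
    have h := mul_le_mul_of_nonneg_left C hγ.le
    linarith [h]
  have tA1 := mul_le_mul_of_nonneg_left (le_abs_self (w * a)) hρ.le
  have tA2 := mul_le_mul_of_nonneg_left (neg_abs_le (w * a)) hρ.le
  have tB1 := mul_le_mul_of_nonneg_left (le_abs_self (v * (γ * a - b))) hμ.le
  have tB2 := mul_le_mul_of_nonneg_left (neg_abs_le (v * (γ * a - b))) hμ.le
  have tC1 := mul_le_mul_of_nonneg_left (le_abs_self (v * a))
    (by positivity : (0:ℝ) ≤ μ * γ)
  have tC2 := mul_le_mul_of_nonneg_left (neg_abs_le (v * a))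
    (by positivity : (0:ℝ) ≤ μ * γ)
  rw [abs_le]
  constructor
  · linarith [A, B, C', s1, s2, s3, s4, tA2, tB1, tC2]
  · linarith [A, B, C', s1, s2, s3, s4, tA1, tB2, tC1]

/-- Midpoint average `U_{j+1/2} = (U_j + U_{j+1})/2` of a grid function. -/
def gridMid (U : ℕ → ℝ) (j : ℕ) : ℝ := (U j + U (j + 1)) / 2

/-- The discrete ORFD energy. -/
def discEnergy (ρ μ β γ α₁ h : ℝ) (N : ℕ) (u1 u2 w1 w2 : ℕ → ℝ) : ℝ :=
  h / 2 * ∑ j ∈ Finset.range (N + 1),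
    (ρ * gridMid w1 j ^ 2 + μ * gridMid w2 j ^ 2
      + β * (γ * gridMid u1 j - gridMid u2 j) ^ 2 + α₁ * gridMid u1 j ^ 2)

/-- The auxiliary functional
`φ_h = h Σ_{j=0}^N x_{j+1/2}(ρ u¹_{j+1/2} w¹_{j+1/2} + μ u²_{j+1/2} w²_{j+1/2})`,
with `x_{j+1/2} = (j + 1/2)h`. -/
def discPhi (ρ μ h : ℝ) (N : ℕ) (u1 u2 w1 w2 : ℕ → ℝ) : ℝ :=
  h * ∑ j ∈ Finset.range (N + 1), ((j : ℝ) + 1 / 2) * h *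
    (ρ * gridMid u1 j * gridMid w1 j + μ * gridMid u2 j * gridMid w2 j)

/-- `|φ_h| ≤ L η E_h`; consequently, for every `0 < δ < 1/(Lη)`,
`(1 − δLη) E_h ≤ E_h + δ φ_h ≤ (1 + δLη) E_h`. -/
theorem stmt_9 (ρ μ α β γ α₁ η : ℝ)
    (hρ : 0 < ρ) (hμ : 0 < μ) (hα : 0 < α) (hβ : 0 < β) (hγ : 0 < γ)
    (hα₁def : α₁ = α - γ ^ 2 * β) (hα₁ : 0 < α₁)
    (hη : η = max (Real.sqrt (ρ / α₁) + Real.sqrt (μ * γ ^ 2 / α₁))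
      (Real.sqrt (μ / β) + Real.sqrt (μ * γ ^ 2 / α₁)))
    (N : ℕ) (L h : ℝ) (hL : 0 < L) (hh : h = L / (N + 1))
    (u1 u2 w1 w2 : ℕ → ℝ) :
    |discPhi ρ μ h N u1 u2 w1 w2| ≤ L * η * discEnergy ρ μ β γ α₁ h N u1 u2 w1 w2 ∧
    ∀ δ : ℝ, 0 < δ → δ < 1 / (L * η) →
      (1 - δ * L * η) * discEnergy ρ μ β γ α₁ h N u1 u2 w1 w2 ≤
          discEnergy ρ μ β γ α₁ h N u1 u2 w1 w2 + δ * discPhi ρ μ h N u1 u2 w1 w2 ∧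
        discEnergy ρ μ β γ α₁ h N u1 u2 w1 w2 + δ * discPhi ρ μ h N u1 u2 w1 w2 ≤
          (1 + δ * L * η) * discEnergy ρ μ β γ α₁ h N u1 u2 w1 w2 := by
  have hN1 : (0:ℝ) < (N:ℝ) + 1 := by positivity
  have hh0 : 0 < h := by rw [hh]; positivity
  have hsq : Real.sqrt (μ * γ ^ 2 / α₁) = γ * Real.sqrt (μ / α₁) := by
    rw [show μ * γ ^ 2 / α₁ = γ ^ 2 * (μ / α₁) by ring, Real.sqrt_mul (sq_nonneg γ),
      Real.sqrt_sq hγ.le]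
  have hη1 : Real.sqrt (ρ / α₁) + γ * Real.sqrt (μ / α₁) ≤ η := by
    rw [hη]; rw [hsq] at *; exact le_max_left _ _
  have hη2 : Real.sqrt (μ / β) + γ * Real.sqrt (μ / α₁) ≤ η := by
    rw [hη]; rw [hsq] at *; exact le_max_right _ _
  have hη0 : 0 ≤ η := le_trans (by positivity) hη1
  set S : ℕ → ℝ := fun j => ρ * gridMid w1 j ^ 2 + μ * gridMid w2 j ^ 2
      + β * (γ * gridMid u1 j - gridMid u2 j) ^ 2 + α₁ * gridMid u1 j ^ 2 with hS
  set P : ℕ → ℝ := fun j =>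
    ρ * gridMid u1 j * gridMid w1 j + μ * gridMid u2 j * gridMid w2 j with hP
  have hSnn : ∀ j, 0 ≤ S j := fun j => by simp only [hS]; positivity
  have key : |discPhi ρ μ h N u1 u2 w1 w2| ≤
      L * η * discEnergy ρ μ β γ α₁ h N u1 u2 w1 w2 := by
    have hterm : ∀ j ∈ Finset.range (N + 1),
        |(((j:ℝ) + 1 / 2) * h) * P j| ≤ L * (η / 2 * S j) := by
      intro j hj
      have hjN : (j:ℝ) ≤ (N:ℝ) := by
        exact_mod_cast Nat.lt_succ_iff.mp (Finset.mem_range.mp hj)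
      have hx0 : 0 ≤ ((j:ℝ) + 1 / 2) * h := by positivity
      have hxL : ((j:ℝ) + 1 / 2) * h ≤ L := by
        have : ((j:ℝ) + 1 / 2) * h ≤ ((N:ℝ) + 1) * h :=
          mul_le_mul_of_nonneg_right (by linarith) hh0.le
        rw [hh] at this ⊢
        calc ((j:ℝ) + 1 / 2) * (L / (↑N + 1)) ≤ ((N:ℝ) + 1) * (L / (↑N + 1)) := this
          _ = L := by field_simp
      have hpt := pointwise9 ρ μ β γ α₁ η hρ hμ hβ hγ hα₁ hη1 hη2
        (gridMid u1 j) (gridMid u2 j) (gridMid w1 j) (gridMid w2 j)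
      rw [abs_mul, abs_of_nonneg hx0]
      exact mul_le_mul hxL hpt (abs_nonneg _) hL.le
    have habs : |∑ j ∈ Finset.range (N + 1), (((j:ℝ) + 1 / 2) * h) * P j| ≤
        ∑ j ∈ Finset.range (N + 1), L * (η / 2 * S j) :=
      le_trans (Finset.abs_sum_le_sum_abs _ _) (Finset.sum_le_sum hterm)
    have heq : |discPhi ρ μ h N u1 u2 w1 w2| =
        h * |∑ j ∈ Finset.range (N + 1), (((j:ℝ) + 1 / 2) * h) * P j| := by
      rw [discPhi, abs_mul, abs_of_pos hh0]
    rw [heq, discEnergy]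
    calc h * |∑ j ∈ Finset.range (N + 1), (((j:ℝ) + 1 / 2) * h) * P j|
        ≤ h * ∑ j ∈ Finset.range (N + 1), L * (η / 2 * S j) :=
          mul_le_mul_of_nonneg_left habs hh0.le
      _ = L * η * (h / 2 * ∑ j ∈ Finset.range (N + 1), S j) := by
          rw [Finset.mul_sum, Finset.mul_sum]; ring_nf
          rw [Finset.mul_sum]
          congr 1; ext j; ring
  refine ⟨key, fun δ hδ _ => ?_⟩
  rcases abs_le.mp key with ⟨k1, k2⟩
  constructor
  · nlinarith [mul_le_mul_of_nonneg_left k1 hδ.le]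
  · nlinarith [mul_le_mul_of_nonneg_left k2 hδ.le]

end
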